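/- Fix an integer D ≥ 2 and 0 < λ < λ_D, and for n ∈ ℕ define h̄(n) = inf{h ≥ 1 : p_h < 1/n}. Then h̄(n) − ln(ln n)/ln(D) = O(1) as n → ∞; i.e. there exists a constant c such that |h̄(n) − ln(ln n)/ln(D)| ≤ c for all sufficiently large n. -/

import Mathlib

open scoped Classical BigOperators
open Filter

namespace PlantedStructures

/-- A graph on vertex set `[n]`. -/
abbrev Graph (n : ℕ) := SimpleGraph (Fin n)

/-- Number of edges of a graph on `[n]`. -/
noncomputable def edgeCount {n : ℕ} (G : Graph n) : ℕ := G.edgeSet.ncard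

/-- The Erdős–Rényi probability `ℙ0(G)` of an individual graph `G` on `[n]`,
with edge probability `p`. -/
noncomputable def P0 (n : ℕ) (p : ℝ) (G : Graph n) : ℝ :=
  p ^ edgeCount G * (1 - p) ^ (n.choose 2 - edgeCount G)

/-- Probability of an event under `ℙ0`. -/
noncomputable def Pr0 (n : ℕ) (p : ℝ) (A : Graph n → Prop) : ℝ :=
  ∑ G : Graph n, if A G then P0 n p G else 0

/-- Expectation of a functional of the graph under `ℙ0`. -/
noncomputable def E0 (n : ℕ) (p : ℝ) (f : Graph n → ℝ) : ℝ :=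
  ∑ G : Graph n, P0 n p G * f G

/-- The probability `ℙ1(G)` of an individual graph `G` on `[n]` under the planted
distribution: `G = G0 ⊔ σ(Γ)` where `G0 ~ G(n,p)` and `σ` is a uniformly random
injection of the vertices of `Γ` into `[n]`, independent of `G0`. -/
noncomputable def P1 (n : ℕ) (p : ℝ) {V : Type*} [Fintype V] (Γ : SimpleGraph V)
    (G : Graph n) : ℝ :=
  (∑ σ : V ↪ Fin n, ∑ G0 : Graph n, if G0 ⊔ Γ.map σ = G then P0 n p G0 else 0) /
    (Fintype.card (V ↪ Fin n) : ℝ)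

/-- Probability of a joint event of the planted injection `σ` and the observed
graph `G = G0 ⊔ σ(Γ)`, under the planted distribution. -/
noncomputable def PrJoint (n : ℕ) (p : ℝ) {V : Type*} [Fintype V] (Γ : SimpleGraph V)
    (A : (V ↪ Fin n) → Graph n → Prop) : ℝ :=
  (∑ σ : V ↪ Fin n, ∑ G0 : Graph n, if A σ (G0 ⊔ Γ.map σ) then P0 n p G0 else 0) /
    (Fintype.card (V ↪ Fin n) : ℝ)

/-- Probability of an event under the planted distribution `ℙ1`. -/
noncomputable def Pr1 (n : ℕ) (p : ℝ) {V : Type*} [Fintype V] (Γ : SimpleGraph V)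
    (A : Graph n → Prop) : ℝ :=
  PrJoint n p Γ (fun _ G => A G)

/-- The likelihood ratio `L(G) = ℙ1(G) / ℙ0(G)`. -/
noncomputable def LR (n : ℕ) (p : ℝ) {V : Type*} [Fintype V] (Γ : SimpleGraph V)
    (G : Graph n) : ℝ :=
  P1 n p Γ G / P0 n p G

/-- The number of copies of `Γ` in `G`, i.e. of subgraphs of `G` isomorphic to `Γ`. -/
noncomputable def numCopies {V : Type*} (Γ : SimpleGraph V) {n : ℕ} (G : Graph n) : ℕ :=
  Set.ncard {H : G.Subgraph | Nonempty (H.coe ≃g Γ)}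

/-- Total variation distance between `ℙ1` and `ℙ0`. -/
noncomputable def dTV (n : ℕ) (p : ℝ) {V : Type*} [Fintype V] (Γ : SimpleGraph V) : ℝ :=
  (∑ G : Graph n, |P1 n p Γ G - P0 n p G|) / 2

/-- The planted vertex set `𝒦 = σ([K])`. -/
noncomputable def plantedSet {n : ℕ} {V : Type*} [Fintype V] (σ : V ↪ Fin n) :
    Finset (Fin n) :=
  Finset.univ.map σ

/-- The overlap `ov(K̂) = Σ_{i ∈ [n]} ℙ1(i ∈ K̂(G) ∩ 𝒦)` of an estimator `K̂`. -/
noncomputable def overlap (n : ℕ) (p : ℝ) {V : Type*} [Fintype V] (Γ : SimpleGraph V)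
    (kHat : Graph n → Finset (Fin n)) : ℝ :=
  (∑ σ : V ↪ Fin n, ∑ G0 : Graph n,
      P0 n p G0 * ((kHat (G0 ⊔ Γ.map σ) ∩ plantedSet σ).card : ℝ)) /
    (Fintype.card (V ↪ Fin n) : ℝ)


/-- The star graph with `K` edges: vertex `0` is the center, joined to the `K` leaves. -/
def starGraph (K : ℕ) : SimpleGraph (Fin (K + 1)) :=
  SimpleGraph.fromRel (fun i _ => i = 0)

/-- `inPathEdge K u v` states that `{u, v}` is an edge of the fixed path
`(1 − 2 − ⋯ − K)` on the first `K` vertices of `[n]`. -/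
def inPathEdge (K : ℕ) {n : ℕ} (u v : Fin n) : Prop :=
  u.val < K ∧ v.val < K ∧ (u.val + 1 = v.val ∨ v.val + 1 = u.val)

/-- The number of ordered `K`-paths in `G`: ordered tuples of `K` distinct vertices
in which consecutive vertices are adjacent in `G`. -/
noncomputable def numOrderedPaths (n K : ℕ) (G : Graph n) : ℕ :=
  Set.ncard {f : Fin K ↪ Fin n |
    ∀ (i : ℕ) (h : i + 1 < K), G.Adj (f ⟨i, Nat.lt_of_succ_lt h⟩) (f ⟨i + 1, h⟩)}

/-- The number `S` of edges that the ordered `K`-path `f` has in common with the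
fixed path `(1 − 2 − ⋯ − K)`. -/
noncomputable def commonEdges (n K : ℕ) (f : Fin K ↪ Fin n) : ℕ :=
  ((Finset.range K).filter (fun i =>
    ∃ h : i + 1 < K, inPathEdge K (f ⟨i, Nat.lt_of_succ_lt h⟩) (f ⟨i + 1, h⟩))).card

/-- The number of indices `1 ≤ t ≤ m` with `Z_t = 1`, i.e. `Σ_{t=1}^m Z_t⁺`, for the
random path given by the injection `f`. -/
noncomputable def zPlusSum (n K m : ℕ) (f : Fin K ↪ Fin n) : ℕ :=
  ((Finset.range m).filter (fun i =>
    ∃ h : i + 1 < K, inPathEdge K (f ⟨i, Nat.lt_of_succ_lt h⟩) (f ⟨i + 1, h⟩))).card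

/-- `z⁺` for the three states `−1, 0, 1` (encoded as `0, 1, 2 : Fin 3`). -/
def statePlus : Fin 3 → ℕ := ![0, 0, 1]

/-- Initial distribution of the Markov chain `Z′`:
`ℙ(Z′_1 = 1) = (K/n′)(2/n′)`, `ℙ(Z′_1 ≥ 0) = K/n′`, where `n′ = n − K`. -/
noncomputable def chainInit (n K : ℕ) : Fin 3 → ℝ :=
  ![1 - K / ((n : ℝ) - K),
    K / ((n : ℝ) - K) - 2 * K / ((n : ℝ) - K) ^ 2,
    2 * K / ((n : ℝ) - K) ^ 2]

/-- Transition matrix of the Markov chain `Z′` on states `−1, 0, 1`. -/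
noncomputable def chainTrans (n K : ℕ) : Fin 3 → Fin 3 → ℝ :=
  ![![1 - K / ((n : ℝ) - K), K / ((n : ℝ) - K), 0],
    ![1 - K / ((n : ℝ) - K), ((K : ℝ) - 2) / ((n : ℝ) - K), 2 / ((n : ℝ) - K)],
    ![1 - K / ((n : ℝ) - K), ((K : ℝ) - 1) / ((n : ℝ) - K), 1 / ((n : ℝ) - K)]]

/-- `chainF n K x t s = E[x^{Σ_{u=1}^{t+1} Z′_u⁺} ⬝ 1{Z′_{t+1} = s}]`. -/
noncomputable def chainF (n K : ℕ) (x : ℝ) : ℕ → Fin 3 → ℝ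
  | 0 => fun s => chainInit n K s * x ^ statePlus s
  | (t + 1) => fun s =>
      (∑ s' : Fin 3, chainF n K x t s' * chainTrans n K s' s) * x ^ statePlus s

/-- `E[x^{Σ_{t=1}^m Z′_t⁺}]` for the Markov chain `Z′`. -/
noncomputable def chainExp (n K : ℕ) (x : ℝ) (m : ℕ) : ℝ :=
  ∑ s : Fin 3, chainF n K x (m - 1) s

/-- `ψ_D(μ) = ℙ(Poisson(μ) ≥ D)`. -/
noncomputable def psi (D : ℕ) (μ : ℝ) : ℝ :=
  1 - ∑ j ∈ Finset.range D, Real.exp (-μ) * μ ^ j / (Nat.factorial j)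

/-- `p*(D,λ)`: the largest nonnegative root of `p = ψ_D(λ p)`. -/
noncomputable def pstar (D : ℕ) (lam : ℝ) : ℝ :=
  sSup {p : ℝ | 0 ≤ p ∧ p = psi D (lam * p)}

/-- `λ_D = sup{λ > 0 : p*(D,λ) = 0}`, the threshold for emergence of the `D`-core. -/
noncomputable def lambdaD (D : ℕ) : ℝ :=
  sSup {lam : ℝ | 0 < lam ∧ pstar D lam = 0}

/-- The sequence `p_h` (for `h ≥ 1`): `p_1 = 1`, `p_{h+1} = ψ_D(λ p_h)`. -/
noncomputable def pseq (D : ℕ) (lam : ℝ) : ℕ → ℝ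
  | 0 => 1
  | 1 => 1
  | (h + 2) => psi D (lam * pseq D lam (h + 1))

/-- `h̄(n) = inf{h ≥ 1 : p_h < 1/n}`. -/
noncomputable def hbar (D : ℕ) (lam : ℝ) (n : ℕ) : ℕ :=
  sInf {h : ℕ | 1 ≤ h ∧ pseq D lam h < 1 / n}

/-- `h̲(n) = sup{h ≥ 1 : p_h > ln(n)/n}`. -/
noncomputable def hlow (D : ℕ) (lam : ℝ) (n : ℕ) : ℕ :=
  sSup {h : ℕ | 1 ≤ h ∧ Real.log n / n < pseq D lam h}

/-- The vertex type of the complete `D`-ary tree of height `h`: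
`D^ℓ` vertices at each depth `0 ≤ ℓ ≤ h`. -/
abbrev DaryVertex (D h : ℕ) : Type := Σ ℓ : Fin (h + 1), Fin (D ^ (ℓ : ℕ))

/-- The complete `D`-ary tree of height `h`: every vertex at depth `ℓ < h` has exactly
`D` children; the vertex `m` at depth `ℓ + 1` has parent `m / D` at depth `ℓ`. -/
def daryTree (D h : ℕ) : SimpleGraph (DaryVertex D h) :=
  SimpleGraph.fromRel (fun u v =>
    (u.1 : ℕ) + 1 = (v.1 : ℕ) ∧ (v.2 : ℕ) / D = (u.2 : ℕ))

/-- Neighbourhood of a vertex, as a `Finset`. -/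
noncomputable def nbhd {n : ℕ} (G : Graph n) (v : Fin n) : Finset (Fin n) :=
  Finset.univ.filter (fun w => G.Adj v w)

/-- `v` is a vertex of maximal degree in `G`. -/
def isMaxDegVertex {n : ℕ} (G : Graph n) (v : Fin n) : Prop :=
  ∀ w : Fin n, (nbhd G w).card ≤ (nbhd G v).card

/-- Degree of `v` inside the vertex set `S` (for the peeling operation). -/
noncomputable def degIn {n : ℕ} (G : Graph n) (S : Finset (Fin n)) (v : Fin n) : ℕ :=
  (S.filter (fun w => G.Adj v w)).card

/-- One peeling operation: remove from `S` all vertices of degree one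
(in the subgraph of `G` induced on `S`). -/
noncomputable def peel {n : ℕ} (G : Graph n) (S : Finset (Fin n)) : Finset (Fin n) :=
  S.filter (fun v => degIn G S v ≠ 1)

/-- The vertex set of a connected component, as a `Finset`. -/
noncomputable def componentFinset {n : ℕ} (G : Graph n) (c : G.ConnectedComponent) :
    Finset (Fin n) :=
  Finset.univ.filter (fun w => G.connectedComponentMk w = c)

/-- The set `S` contains a longest path of `G`. -/
def containsLongestPath {n : ℕ} (G : Graph n) (S : Finset (Fin n)) : Prop :=
  ∃ (u v : Fin n) (p : G.Walk u v), p.IsPath ∧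
    (∀ (u' v' : Fin n) (q : G.Walk u' v'), q.IsPath → q.length ≤ p.length) ∧
    (∀ w ∈ p.support, w ∈ S)


/-- The proportion `I_Γ` of ordered pairs of copies of `Γ` in `G` whose vertex sets
intersect (set to `0` when `G` contains no copy of `Γ`). -/
noncomputable def IGamma {V : Type*} (Γ : SimpleGraph V) {n : ℕ} (G : Graph n) : ℝ :=
  if numCopies Γ G = 0 then 0
  else
    (Set.ncard {H : G.Subgraph × G.Subgraph |
        Nonempty (H.1.coe ≃g Γ) ∧ Nonempty (H.2.coe ≃g Γ) ∧ (H.1.verts ∩ H.2.verts).Nonempty} : ℝ)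
      / (numCopies Γ G : ℝ) ^ 2

/-- The overlap of the randomized star estimator which outputs the max-degree vertex
`vstar G` together with `K` of its neighbours chosen uniformly at random:
`Σ_i ℙ1(i ∈ K̂(G) ∩ 𝒦)`, averaging over the planted injection `σ`, the graph `G0` and
the uniformly random `K`-subset of neighbours. -/
noncomputable def starEstOverlap (n K : ℕ) (p : ℝ) (vstar : Graph n → Fin n) : ℝ :=
  (∑ σ : Fin (K + 1) ↪ Fin n, ∑ G0 : Graph n, P0 n p G0 *
      ((if vstar (G0 ⊔ (starGraph K).map σ) ∈ plantedSet σ then (1 : ℝ) else 0) +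
        (∑ S ∈ (nbhd (G0 ⊔ (starGraph K).map σ)
              (vstar (G0 ⊔ (starGraph K).map σ))).powersetCard K,
            ((S ∩ plantedSet σ).card : ℝ)) /
          (((nbhd (G0 ⊔ (starGraph K).map σ)
              (vstar (G0 ⊔ (starGraph K).map σ))).powersetCard K).card : ℝ))) /
    (Fintype.card (Fin (K + 1) ↪ Fin n) : ℝ)


lemma real_exp_tsum (x : ℝ) : Real.exp x = ∑' n : ℕ, x ^ n / n.factorial := by
  rw [Real.exp_eq_exp_ℝ, NormedSpace.exp_eq_tsum_div]

lemma psi_tail (D : ℕ) (μ : ℝ) :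
    psi D μ = Real.exp (-μ) * ∑' k : ℕ, μ ^ (k + D) / (k + D).factorial := by
  have hs : Summable (fun n : ℕ => μ ^ n / n.factorial) := Real.summable_pow_div_factorial μ
  have h := Summable.sum_add_tsum_nat_add D hs
  have : (∑' k : ℕ, μ ^ (k + D) / (k + D).factorial)
      = Real.exp μ - ∑ i ∈ Finset.range D, μ ^ i / i.factorial := by
    rw [real_exp_tsum]; linarith [h]
  rw [this, psi]
  rw [mul_sub, ← Real.exp_add]
  simp [Finset.mul_sum, mul_div_assoc]

lemma summable_tail (D : ℕ) (μ : ℝ) : Summable (fun k : ℕ => μ ^ (k + D) / (k + D).factorial) :=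
  (summable_nat_add_iff D).2 (Real.summable_pow_div_factorial μ)

lemma psi_le_one (D : ℕ) (μ : ℝ) (hμ : 0 ≤ μ) : psi D μ ≤ 1 := by
  unfold psi
  have : (0:ℝ) ≤ ∑ j ∈ Finset.range D, Real.exp (-μ) * μ ^ j / (Nat.factorial j) :=
    Finset.sum_nonneg fun j _ => by positivity
  linarith

lemma psi_nonneg (D : ℕ) (μ : ℝ) (hμ : 0 ≤ μ) : 0 ≤ psi D μ := by
  rw [psi_tail]
  have : (0:ℝ) ≤ ∑' k : ℕ, μ ^ (k + D) / (k + D).factorial :=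
    tsum_nonneg fun k => by positivity
  positivity

lemma psi_lower (D : ℕ) (μ : ℝ) (hμ : 0 ≤ μ) :
    Real.exp (-μ) * (μ ^ D / D.factorial) ≤ psi D μ := by
  rw [psi_tail]
  have h := Summable.le_tsum (summable_tail D μ) 0 (fun j _ => by positivity)
  simp only [zero_add] at h
  have he : (0:ℝ) < Real.exp (-μ) := Real.exp_pos _
  nlinarith [h, he.le]

lemma psi_upper (D : ℕ) (μ : ℝ) (hμ : 0 ≤ μ) : psi D μ ≤ μ ^ D / D.factorial := by
  rw [psi_tail]
  have hterm : ∀ k : ℕ, μ ^ (k + D) / (k + D).factorial ≤ μ ^ D / D.factorial * (μ ^ k / k.factorial) := by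
    intro k
    have hdvd : (D.factorial * k.factorial : ℕ) ≤ (k + D).factorial := by
      have := Nat.factorial_mul_factorial_dvd_factorial_add D k
      exact Nat.le_of_dvd (Nat.factorial_pos _) (by rwa [add_comm k D])
    have h1 : (0:ℝ) < (D.factorial : ℝ) * k.factorial := by positivity
    have h2 : ((D.factorial : ℝ) * k.factorial) ≤ (k + D).factorial := by exact_mod_cast hdvd
    have hp : μ ^ (k + D) = μ ^ D * μ ^ k := by rw [pow_add, mul_comm]
    rw [hp, div_mul_div_comm]
    gcongr
  calc Real.exp (-μ) * ∑' k : ℕ, μ ^ (k + D) / (k + D).factorial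
      ≤ Real.exp (-μ) * ∑' k : ℕ, μ ^ D / D.factorial * (μ ^ k / k.factorial) := by
        exact mul_le_mul_of_nonneg_left (Summable.tsum_le_tsum hterm (summable_tail D μ)
            ((Real.summable_pow_div_factorial μ).mul_left _)) (Real.exp_pos _).le
    _ = μ ^ D / D.factorial := by
        rw [tsum_mul_left, ← real_exp_tsum]
        rw [← mul_assoc, mul_comm (Real.exp (-μ)), mul_assoc, ← Real.exp_add]
        simp

lemma psi_zero (D : ℕ) (hD : 1 ≤ D) : psi D 0 = 0 := by
  rw [psi_tail]
  have : ∀ k : ℕ, (0:ℝ) ^ (k + D) / (k + D).factorial = 0 := by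
    intro k
    rw [zero_pow (by omega), zero_div]
  rw [tsum_congr this, tsum_zero, mul_zero]

lemma psi_continuous (D : ℕ) : Continuous (psi D) := by
  unfold psi
  fun_prop

lemma hasDerivAt_partial (D : ℕ) (μ : ℝ) :
    HasDerivAt (fun x : ℝ => ∑ j ∈ Finset.range (D + 1), Real.exp (-x) * x ^ j / (Nat.factorial j))
      (-(Real.exp (-μ) * μ ^ D / D.factorial)) μ := by
  induction D with
  | zero =>
      simp only [Finset.sum_range_one, pow_zero, mul_one, Nat.factorial_zero, Nat.cast_one,
        div_one]
      simpa [Function.comp_def] using ((Real.hasDerivAt_exp (-μ)).comp μ ((hasDerivAt_id μ).neg))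
  | succ d ih =>
      have h1 : HasDerivAt (fun x : ℝ => Real.exp (-x) * x ^ (d+1) / ((d+1).factorial : ℝ))
          ((Real.exp (-μ) * μ ^ d / d.factorial) - Real.exp (-μ) * μ ^ (d+1) / ((d+1).factorial : ℝ)) μ := by
        have he : HasDerivAt (fun x : ℝ => Real.exp (-x)) (-Real.exp (-μ)) μ := by
          simpa [Function.comp_def] using ((Real.hasDerivAt_exp (-μ)).comp μ ((hasDerivAt_id μ).neg))
        have hp : HasDerivAt (fun x : ℝ => x ^ (d+1)) ((d+1 : ℕ) * μ ^ d) μ := by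
          simpa using hasDerivAt_pow (d+1) μ
        have := (he.mul hp).div_const ((d+1).factorial : ℝ)
        refine this.congr_deriv ?_
        have hfac : ((d+1).factorial : ℝ) = (d+1) * d.factorial := by
          rw [Nat.factorial_succ]; push_cast; ring
        rw [hfac]; push_cast; field_simp
        ring
      have := ih.add h1
      have heq : (fun x : ℝ => ∑ j ∈ Finset.range (d + 2), Real.exp (-x) * x ^ j / (Nat.factorial j))
          = (fun x : ℝ => (∑ j ∈ Finset.range (d + 1), Real.exp (-x) * x ^ j / (Nat.factorial j))
              + Real.exp (-x) * x ^ (d+1) / ((d+1).factorial : ℝ)) := by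
        funext x
        rw [Finset.sum_range_succ]
      rw [heq]
      refine this.congr_deriv ?_
      ring

lemma psi_hasDerivAt (D : ℕ) (μ : ℝ) :
    HasDerivAt (psi (D + 1)) (Real.exp (-μ) * μ ^ D / D.factorial) μ := by
  have := ((hasDerivAt_const μ (1:ℝ)).sub (hasDerivAt_partial D μ))
  unfold psi
  simpa [Pi.sub_def] using this

lemma psi_mono (D : ℕ) (hD : 1 ≤ D) {a b : ℝ} (ha : 0 ≤ a) (hab : a ≤ b) :
    psi D a ≤ psi D b := by
  obtain ⟨d, rfl⟩ : ∃ d, D = d + 1 := ⟨D - 1, by omega⟩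
  have hmono : MonotoneOn (psi (d+1)) (Set.Ici (0:ℝ)) := by
    apply monotoneOn_of_deriv_nonneg (convex_Ici 0) (psi_continuous (d+1)).continuousOn
    · intro x hx
      exact (psi_hasDerivAt d x).differentiableAt.differentiableWithinAt
    · intro x hx
      rw [interior_Ici] at hx
      rw [(psi_hasDerivAt d x).deriv]
      have : (0:ℝ) ≤ x := le_of_lt hx
      positivity
  exact hmono ha (le_trans ha hab) hab



lemma root_le_one (D : ℕ) {lam p : ℝ} (hlam : 0 ≤ lam)
    (hp : 0 ≤ p ∧ p = psi D (lam * p)) : p ≤ 1 := by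
  rw [hp.2]
  exact psi_le_one D _ (mul_nonneg hlam hp.1)

lemma rootset_bdd (D : ℕ) {lam : ℝ} (hlam : 0 ≤ lam) :
    BddAbove {p : ℝ | 0 ≤ p ∧ p = psi D (lam * p)} :=
  ⟨1, fun p hp => root_le_one D hlam hp⟩

lemma zero_mem_rootset (D : ℕ) (hD : 1 ≤ D) (lam : ℝ) :
    (0:ℝ) ∈ {p : ℝ | 0 ≤ p ∧ p = psi D (lam * p)} :=
  ⟨le_refl 0, by rw [mul_zero, psi_zero D hD]⟩

lemma rootset_closed (D : ℕ) (lam : ℝ) :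
    IsClosed {p : ℝ | 0 ≤ p ∧ p = psi D (lam * p)} := by
  apply IsClosed.inter
  · exact isClosed_Ici (a := (0:ℝ))
  · exact isClosed_eq continuous_id ((psi_continuous D).comp (continuous_const.mul continuous_id))

lemma pstar_mem (D : ℕ) (hD : 1 ≤ D) {lam : ℝ} (hlam : 0 ≤ lam) :
    pstar D lam ∈ {p : ℝ | 0 ≤ p ∧ p = psi D (lam * p)} :=
  (rootset_closed D lam).csSup_mem ⟨0, zero_mem_rootset D hD lam⟩ (rootset_bdd D hlam)

lemma pstar_one_eq_zero (D : ℕ) (hD : 2 ≤ D) : pstar D 1 = 0 := by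
  have hset : {p : ℝ | 0 ≤ p ∧ p = psi D (1 * p)} = {0} := by
    ext p
    simp only [Set.mem_setOf_eq, Set.mem_singleton_iff, one_mul]
    constructor
    · rintro ⟨hp0, hroot⟩
      by_contra hne
      have hp : 0 < p := lt_of_le_of_ne hp0 (Ne.symm hne)
      have hle1 : p ≤ 1 := root_le_one D zero_le_one ⟨hp0, by rwa [one_mul]⟩
      have h1 : psi D p ≤ p ^ D / D.factorial := psi_upper D p hp0
      have h2 : p ^ D ≤ p ^ 2 := pow_le_pow_of_le_one hp0 hle1 hD
      have h3 : (2:ℝ) ≤ D.factorial := by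
        exact_mod_cast le_trans hD (Nat.self_le_factorial D)
      have h4 : p ^ D / (D.factorial : ℝ) ≤ p ^ 2 / 2 := by
        apply div_le_div₀ (by positivity) h2 (by norm_num) h3
      nlinarith [hroot, h1, h4, sq_nonneg p]
    · rintro rfl
      exact ⟨le_refl 0, by rw [psi_zero D (by omega)]⟩
  rw [pstar, hset, csSup_singleton]

lemma pstar_eq_zero_of_lt (D : ℕ) (hD : 2 ≤ D) {lam lam' : ℝ} (hlam : 0 < lam)
    (hlt : lam < lam') (h0 : pstar D lam' = 0) : pstar D lam = 0 := by
  have hD1 : 1 ≤ D := by omega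
  have hmem := pstar_mem D hD1 hlam.le
  obtain ⟨hge, hroot⟩ := hmem
  rcases eq_or_lt_of_le hge with h | h
  · exact h.symm
  · exfalso
    set p0 := pstar D lam with hp0def
    have hp0le1 : p0 ≤ 1 := root_le_one D hlam.le ⟨hge, hroot⟩
    -- IVT for g = fun p => psi D (lam' * p) - p on [p0, 1]
    set g : ℝ → ℝ := fun p => psi D (lam' * p) - p with hg
    have hcont : ContinuousOn g (Set.Icc p0 1) :=
      (((psi_continuous D).comp (continuous_const.mul continuous_id)).sub continuous_id).continuousOn
    have hga : 0 ≤ g p0 := by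
      have : psi D (lam * p0) ≤ psi D (lam' * p0) :=
        psi_mono D hD1 (by positivity) (by nlinarith)
      simp only [hg]
      rw [← hroot] at this
      linarith
    have hgb : g 1 ≤ 0 := by
      simp only [hg, mul_one]
      have : psi D lam' ≤ 1 := psi_le_one D lam' (by linarith)
      linarith
    have : (0:ℝ) ∈ Set.Icc (g 1) (g p0) := ⟨hgb, hga⟩
    obtain ⟨p, hpmem, hgp⟩ := intermediate_value_Icc' hp0le1 hcont this
    have hroot' : p ∈ {q : ℝ | 0 ≤ q ∧ q = psi D (lam' * q)} := by
      refine ⟨le_trans h.le hpmem.1, ?_⟩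
      simp only [hg] at hgp
      linarith
    have := le_csSup (rootset_bdd D (by linarith : (0:ℝ) ≤ lam')) hroot'
    rw [← pstar, h0] at this
    have : 0 < p := lt_of_lt_of_le h hpmem.1
    linarith

lemma pstar_eq_zero (D : ℕ) (hD : 2 ≤ D) {lam : ℝ} (hlam : 0 < lam)
    (hsub : lam < lambdaD D) : pstar D lam = 0 := by
  have hne : {l : ℝ | 0 < l ∧ pstar D l = 0}.Nonempty :=
    ⟨1, one_pos, pstar_one_eq_zero D hD⟩
  obtain ⟨lam', hlam', hlt⟩ := exists_lt_of_lt_csSup hne hsub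
  exact pstar_eq_zero_of_lt D hD hlam hlt hlam'.2


lemma pseq_pos (D : ℕ) (hD : 1 ≤ D) {lam : ℝ} (hlam : 0 < lam) :
    ∀ h, 0 < pseq D lam h := by
  intro h
  induction h using Nat.strong_induction_on with
  | _ h ih =>
    match h with
    | 0 => exact one_pos
    | 1 => exact one_pos
    | (k + 2) =>
      have hk := ih (k + 1) (by omega)
      show 0 < psi D (lam * pseq D lam (k + 1))
      have hμ : 0 < lam * pseq D lam (k + 1) := by positivity
      have := psi_lower D (lam * pseq D lam (k + 1)) hμ.le
      have hpos : (0:ℝ) < Real.exp (-(lam * pseq D lam (k+1))) *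
          ((lam * pseq D lam (k+1)) ^ D / D.factorial) := by positivity
      linarith

lemma pseq_le_one (D : ℕ) (hD : 1 ≤ D) {lam : ℝ} (hlam : 0 < lam) :
    ∀ h, pseq D lam h ≤ 1 := by
  intro h
  match h with
  | 0 => exact le_refl 1
  | 1 => exact le_refl 1
  | (k + 2) =>
    show psi D (lam * pseq D lam (k + 1)) ≤ 1
    have := pseq_pos D hD hlam (k+1)
    exact psi_le_one D _ (by positivity)

lemma pseq_antitone (D : ℕ) (hD : 1 ≤ D) {lam : ℝ} (hlam : 0 < lam) :
    Antitone (pseq D lam) := by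
  apply antitone_nat_of_succ_le
  intro h
  induction h with
  | zero => exact le_refl 1
  | succ k ihk =>
    match k with
    | 0 =>
      show psi D (lam * pseq D lam 1) ≤ 1
      exact psi_le_one D _ (by show (0:ℝ) ≤ lam * 1; linarith)
    | (j + 1) =>
      show psi D (lam * pseq D lam (j + 2)) ≤ psi D (lam * pseq D lam (j + 1))
      apply psi_mono D hD
      · have := pseq_pos D hD hlam (j + 2)
        positivity
      · have := ihk
        nlinarith [pseq_pos D hD hlam (j+2)]

lemma pseq_tendsto_zero (D : ℕ) (hD : 2 ≤ D) {lam : ℝ} (hlam : 0 < lam)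
    (hsub : lam < lambdaD D) :
    Tendsto (pseq D lam) atTop (nhds 0) := by
  have hD1 : 1 ≤ D := by omega
  have hbdd : BddBelow (Set.range (pseq D lam)) :=
    ⟨0, by rintro x ⟨h, rfl⟩; exact (pseq_pos D hD1 hlam h).le⟩
  have htend := tendsto_atTop_ciInf (pseq_antitone D hD1 hlam) hbdd
  set L := ⨅ h, pseq D lam h with hL
  have hL0 : 0 ≤ L := le_ciInf fun h => (pseq_pos D hD1 hlam h).le
  -- L is a root
  have ht2 : Tendsto (fun h => pseq D lam (h + 2)) atTop (nhds L) :=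
    htend.comp (tendsto_add_atTop_nat 2)
  have ht1 : Tendsto (fun h => psi D (lam * pseq D lam (h + 1))) atTop (nhds (psi D (lam * L))) := by
    apply ((psi_continuous D).tendsto _).comp
    exact (tendsto_const_nhds.mul (htend.comp (tendsto_add_atTop_nat 1)))
  have heq : (fun h => pseq D lam (h + 2)) = (fun h => psi D (lam * pseq D lam (h + 1))) := rfl
  rw [heq] at ht2
  have hroot : L = psi D (lam * L) := tendsto_nhds_unique ht2 ht1
  have hmem : L ∈ {p : ℝ | 0 ≤ p ∧ p = psi D (lam * p)} := ⟨hL0, hroot⟩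
  have hle := le_csSup (rootset_bdd D hlam.le) hmem
  rw [← pstar, pstar_eq_zero D hD hlam hsub] at hle
  have : L = 0 := le_antisymm hle hL0
  rwa [this] at htend

noncomputable def qq (D : ℕ) (lam : ℝ) (h : ℕ) : ℝ := -Real.log (pseq D lam h)

lemma qq_nonneg (D : ℕ) (hD : 1 ≤ D) {lam : ℝ} (hlam : 0 < lam) (h : ℕ) :
    0 ≤ qq D lam h := by
  have := Real.log_nonpos (pseq_pos D hD hlam h).le (pseq_le_one D hD hlam h)
  simp only [qq]; linarith

lemma qq_mono (D : ℕ) (hD : 1 ≤ D) {lam : ℝ} (hlam : 0 < lam) :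
    Monotone (qq D lam) := by
  intro a b hab
  simp only [qq, neg_le_neg_iff]
  exact Real.log_le_log (pseq_pos D hD hlam b) (pseq_antitone D hD hlam hab)

noncomputable def CC (D : ℕ) (lam : ℝ) : ℝ := max (lam ^ D / D.factorial) 2
noncomputable def cc (D : ℕ) (lam : ℝ) : ℝ :=
  min (Real.exp (-lam) * lam ^ D / D.factorial) 1

lemma cc_pos (D : ℕ) {lam : ℝ} (hlam : 0 < lam) : 0 < cc D lam :=
  lt_min (by positivity) one_pos

lemma pseq_step (D : ℕ) (hD : 1 ≤ D) {lam : ℝ} (hlam : 0 < lam) (k : ℕ) :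
    cc D lam * pseq D lam (k+1) ^ D ≤ pseq D lam (k+2) ∧
      pseq D lam (k+2) ≤ CC D lam * pseq D lam (k+1) ^ D := by
  set p := pseq D lam (k+1) with hp
  have hp0 : 0 < p := pseq_pos D hD hlam (k+1)
  have hp1 : p ≤ 1 := pseq_le_one D hD hlam (k+1)
  have hμ : 0 ≤ lam * p := by positivity
  have hshow : pseq D lam (k+2) = psi D (lam * p) := rfl
  constructor
  · rw [hshow]
    have hlow := psi_lower D (lam * p) hμ
    have he : Real.exp (-lam) ≤ Real.exp (-(lam * p)) := by
      apply Real.exp_le_exp.2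
      nlinarith
    have h1 : cc D lam * p ^ D ≤ (Real.exp (-lam) * lam ^ D / D.factorial) * p ^ D := by
      apply mul_le_mul_of_nonneg_right (min_le_left _ _) (by positivity)
    have h2 : (Real.exp (-lam) * lam ^ D / D.factorial) * p ^ D
        ≤ Real.exp (-(lam * p)) * ((lam * p) ^ D / D.factorial) := by
      rw [mul_pow]
      have hfac : (0:ℝ) < D.factorial := by positivity
      have : (0:ℝ) ≤ lam ^ D * p ^ D / D.factorial := by positivity
      calc (Real.exp (-lam) * lam ^ D / D.factorial) * p ^ D
          = Real.exp (-lam) * (lam ^ D * p ^ D / D.factorial) := by ring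
        _ ≤ Real.exp (-(lam * p)) * (lam ^ D * p ^ D / D.factorial) :=
            mul_le_mul_of_nonneg_right he this
        _ = Real.exp (-(lam * p)) * ((lam ^ D * p ^ D) / D.factorial) := by ring
    linarith
  · rw [hshow]
    have hup := psi_upper D (lam * p) hμ
    have h1 : (lam * p) ^ D / D.factorial = (lam ^ D / D.factorial) * p ^ D := by
      rw [mul_pow]; ring
    have h2 : (lam ^ D / D.factorial) * p ^ D ≤ CC D lam * p ^ D :=
      mul_le_mul_of_nonneg_right (le_max_left _ _) (by positivity)
    linarith [hup, h1 ▸ hup]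

lemma qq_rec (D : ℕ) (hD : 1 ≤ D) {lam : ℝ} (hlam : 0 < lam) (k : ℕ) :
    (D:ℝ) * qq D lam (k+1) - Real.log (CC D lam) ≤ qq D lam (k+2) ∧
      qq D lam (k+2) ≤ (D:ℝ) * qq D lam (k+1) - Real.log (cc D lam) := by
  obtain ⟨hlow, hup⟩ := pseq_step D hD hlam k
  have hp0 : 0 < pseq D lam (k+1) := pseq_pos D hD hlam (k+1)
  have hp0' : 0 < pseq D lam (k+2) := pseq_pos D hD hlam (k+2)
  have hC : (0:ℝ) < CC D lam := lt_of_lt_of_le two_pos (le_max_right _ _)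
  have hc : (0:ℝ) < cc D lam := cc_pos D hlam
  constructor
  · have := Real.log_le_log hp0' hup
    rw [Real.log_mul hC.ne' (by positivity), Real.log_pow] at this
    simp only [qq]
    push_cast at this ⊢
    linarith
  · have := Real.log_le_log (by positivity) hlow
    rw [Real.log_mul hc.ne' (by positivity), Real.log_pow] at this
    simp only [qq]
    push_cast at this ⊢
    linarith

set_option maxHeartbeats 1600000 in
/-- for `D ≥ 2` and `0 < λ < λ_D`, the threshold
`h̄(n) = inf{h ≥ 1 : p_h < 1/n}` satisfies `h̄(n) = ln ln n / ln D + O(1)`. -/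
theorem statement_14 (D : ℕ) (hD : 2 ≤ D) (lam : ℝ) (hlam : 0 < lam)
    (hsub : lam < lambdaD D) :
    ∃ c : ℝ, ∀ᶠ n : ℕ in atTop,
      |(hbar D lam n : ℝ) - Real.log (Real.log n) / Real.log D| ≤ c := by
  have hD1 : 1 ≤ D := by omega
  have hDR : (2:ℝ) ≤ D := by exact_mod_cast hD
  have hlogD : 0 < Real.log D := Real.log_pos (by linarith)
  set C := CC D lam with hCdef
  set c := cc D lam with hcdef
  have hC2 : (2:ℝ) ≤ C := le_max_right _ _
  have hCpos : (0:ℝ) < C := by linarith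
  have hcpos : (0:ℝ) < c := cc_pos D hlam
  have hc1 : c ≤ 1 := min_le_right _ _
  set β := Real.log C / ((D:ℝ) - 1) with hβdef
  set γ := Real.log c / ((D:ℝ) - 1) with hγdef
  have hD1R : (0:ℝ) < (D:ℝ) - 1 := by linarith
  have hβpos : 0 < β := div_pos (Real.log_pos (by linarith)) hD1R
  have hγnonpos : γ ≤ 0 :=
    div_nonpos_of_nonpos_of_nonneg (Real.log_nonpos hcpos.le hc1) hD1R.le
  have hβeq : ((D:ℝ) - 1) * β = Real.log C := by rw [hβdef]; field_simp [hD1R.ne']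
  have hγeq : ((D:ℝ) - 1) * γ = Real.log c := by rw [hγdef]; field_simp [hD1R.ne']
  -- choose h0 with qq h0 > β
  have htend := pseq_tendsto_zero D hD hlam hsub
  obtain ⟨h0', hh0'⟩ := (htend.eventually_lt_const (Real.exp_pos (-β))).exists
  set h0 := max h0' 1 with hh0def
  have hh0ge1 : 1 ≤ h0 := le_max_right _ _
  have hph0 : pseq D lam h0 < Real.exp (-β) :=
    lt_of_le_of_lt (pseq_antitone D hD1 hlam (le_max_left _ _)) hh0'
  have hqh0 : β < qq D lam h0 := by
    have hp0 : 0 < pseq D lam h0 := pseq_pos D hD1 hlam h0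
    have h := (Real.log_lt_iff_lt_exp hp0).2 hph0
    simp only [qq]; linarith
  -- growth bounds
  set A := qq D lam h0 - β with hAdef
  set B := qq D lam h0 - γ with hBdef
  have hApos : 0 < A := by simp only [hAdef]; linarith
  have hBpos : 0 < B := by simp only [hBdef]; linarith [qq_nonneg D hD1 hlam h0]
  have hAB : A ≤ B := by simp only [hAdef, hBdef]; linarith
  have hgrow : ∀ k : ℕ, β + A * (D:ℝ) ^ k ≤ qq D lam (h0 + k) ∧
      qq D lam (h0 + k) ≤ γ + B * (D:ℝ) ^ k := by
    intro k
    induction k with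
    | zero => simp [hAdef, hBdef]
    | succ k ih =>
      obtain ⟨ih1, ih2⟩ := ih
      obtain ⟨j, hj⟩ : ∃ j, h0 + k = j + 1 := ⟨h0 + k - 1, by omega⟩
      have hrec := qq_rec D hD1 hlam j
      rw [show j + 1 = h0 + k from hj.symm, show j + 2 = h0 + (k + 1) from by omega] at hrec
      obtain ⟨hrec1, hrec2⟩ := hrec
      have hDnn : (0:ℝ) ≤ D := by linarith
      constructor
      · have hm := mul_le_mul_of_nonneg_left ih1 hDnn
        have hpow : (D:ℝ) ^ (k+1) = (D:ℝ) * (D:ℝ)^k := by ring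
        nlinarith [hβeq]
      · have hm := mul_le_mul_of_nonneg_left ih2 hDnn
        have hpow : (D:ℝ) ^ (k+1) = (D:ℝ) * (D:ℝ)^k := by ring
        nlinarith [hγeq]
  -- the constant
  refine ⟨1 + h0 + |Real.log A| / Real.log D + |Real.log B| / Real.log D, ?_⟩
  have hlogn : Tendsto (fun n : ℕ => Real.log n) atTop atTop :=
    Real.tendsto_log_atTop.comp tendsto_natCast_atTop_atTop
  filter_upwards [hlogn.eventually_gt_atTop (qq D lam h0),
    eventually_ge_atTop 1] with n hln hn1
  have hlognpos : 0 < Real.log n := lt_trans (by linarith [qq_nonneg D hD1 hlam h0]) hln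
  have hnpos : (0:ℝ) < n := by exact_mod_cast hn1
  -- the set is nonempty
  have hSne : {h : ℕ | 1 ≤ h ∧ pseq D lam h < 1 / n}.Nonempty := by
    obtain ⟨m, hm⟩ := (htend.eventually_lt_const (by positivity : (0:ℝ) < 1 / n)).exists
    exact ⟨max m 1, le_max_right _ _,
      lt_of_le_of_lt (pseq_antitone D hD1 hlam (le_max_left _ _)) hm⟩
  set h1 := hbar D lam n with hh1def
  have hh1mem : h1 ∈ {h : ℕ | 1 ≤ h ∧ pseq D lam h < 1 / n} := Nat.sInf_mem hSne
  obtain ⟨hh1ge1, hh1lt⟩ := hh1mem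
  -- q h1 > log n
  have hqh1 : Real.log n < qq D lam h1 := by
    have hp : 0 < pseq D lam h1 := pseq_pos D hD1 hlam h1
    have := Real.log_lt_log hp hh1lt
    rw [one_div, Real.log_inv] at this
    simp only [qq]; linarith
  -- h1 > h0
  have hh1gt : h0 < h1 := by
    by_contra hcon
    push_neg at hcon
    have := qq_mono D hD1 hlam hcon
    linarith
  -- minimality: h1 - 1 not in the set
  have hltsInf : h1 - 1 < sInf {h : ℕ | 1 ≤ h ∧ pseq D lam h < 1 / (n:ℝ)} := by
    have hsi : sInf {h : ℕ | 1 ≤ h ∧ pseq D lam h < 1 / (n:ℝ)} = h1 := rfl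
    omega
  have hnotmem : ¬ (1 ≤ h1 - 1 ∧ pseq D lam (h1 - 1) < 1 / n) :=
    Nat.notMem_of_lt_sInf hltsInf
  have hprev : (1:ℝ) / n ≤ pseq D lam (h1 - 1) := by
    by_contra hcon
    push_neg at hcon
    exact hnotmem ⟨by omega, hcon⟩
  have hqprev : qq D lam (h1 - 1) ≤ Real.log n := by
    have hp : 0 < pseq D lam (h1 - 1) := pseq_pos D hD1 hlam (h1 - 1)
    have := Real.log_le_log (by positivity) hprev
    rw [one_div, Real.log_inv] at this
    simp only [qq]; linarith
  -- apply growth bounds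
  obtain ⟨k1, hk1⟩ : ∃ k1, h1 = h0 + k1 := ⟨h1 - h0, by omega⟩
  have hk1pos : 1 ≤ k1 := by omega
  have hup := (hgrow k1).2
  have hlow := (hgrow (k1 - 1)).1
  have hprevidx : h1 - 1 = h0 + (k1 - 1) := by omega
  rw [← hk1] at hup
  rw [← hprevidx] at hlow
  -- A * D^(k1-1) ≤ log n  and  log n < B * D^k1
  have hA' : A * (D:ℝ) ^ (k1 - 1) ≤ Real.log n := by linarith
  have hB' : Real.log n < B * (D:ℝ) ^ k1 := by linarith
  -- take logs
  have hlogA : Real.log A + ((k1:ℝ) - 1) * Real.log D ≤ Real.log (Real.log n) := by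
    have := Real.log_le_log (by positivity) hA'
    rw [Real.log_mul hApos.ne' (by positivity), Real.log_pow] at this
    have hcast : ((k1 - 1 : ℕ) : ℝ) = (k1:ℝ) - 1 := by
      have : (1:ℕ) ≤ k1 := hk1pos
      push_cast [Nat.cast_sub this]
      ring
    rw [hcast] at this
    linarith
  have hlogB : Real.log (Real.log n) < Real.log B + (k1:ℝ) * Real.log D := by
    have := Real.log_lt_log hlognpos hB'
    rw [Real.log_mul hBpos.ne' (by positivity), Real.log_pow] at this
    linarith
  -- conclude
  have hcastk1 : (h1:ℝ) = (h0:ℝ) + k1 := by exact_mod_cast congrArg (Nat.cast (R := ℝ)) hk1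
  rw [abs_le]
  have habsA : Real.log A ≤ |Real.log A| := le_abs_self _
  have habsA' : -|Real.log A| ≤ Real.log A := neg_abs_le _
  have habsB : Real.log B ≤ |Real.log B| := le_abs_self _
  have habsB' : -|Real.log B| ≤ Real.log B := neg_abs_le _
  have hh0nn : (0:ℝ) ≤ h0 := Nat.cast_nonneg _
  set L := Real.log (Real.log (n:ℝ)) with hLdef
  set d := Real.log (D:ℝ) with hddef
  clear_value L d
  clear_value A B h1
  clear hqh1 hqprev hA' hB' hup hlow hprev hh1lt hnotmem hltsInf hSne hph0 hqh0 htend hgrow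
  constructor
  · -- lower bound: from hlogB
    have f0 : L < Real.log B + (k1:ℝ) * d := hlogB
    have f1 : L / d < (Real.log B + (k1:ℝ) * d) / d := (div_lt_div_iff_of_pos_right hlogD).2 f0
    have f2 : (Real.log B + (k1:ℝ) * d) / d = Real.log B / d + k1 := by
      field_simp
    have f3 : Real.log B / d ≤ |Real.log B| / d := (div_le_div_iff_of_pos_right hlogD).2 habsB
    have f4 : (0:ℝ) ≤ |Real.log A| / d := by positivity
    rw [f2] at f1
    linarith
  · -- upper bound: from hlogA
    have e1 : ((k1:ℝ) - 1) ≤ (L - Real.log A) / d := (le_div_iff₀ hlogD).2 (by linarith)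
    have e2 : (L - Real.log A) / d - L / d = -Real.log A / d := by ring
    have e3 : -Real.log A / d ≤ |Real.log A| / d := (div_le_div_iff_of_pos_right hlogD).2 (by linarith)
    have e4 : (0:ℝ) ≤ |Real.log B| / d := by positivity
    linarith

end PlantedStructures
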